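/- With the notation of the context, assume additionally that for each j = 1, …, k−1 the vector c_{j,j+1} ∈ ℤ^{ℓ_{j+1}} has at least two entries differing by more than ℓ_j (i.e., there exist ν, μ with |c_{j,j+1}^ν − c_{j,j+1}^μ| > ℓ_j). Then ℤ^k \ ⋃_{J ⊆ {1,…,k}} ℳ_ℤ(R(J)) = {a ∈ ℤ^k : a ∉ ⋃_{J ⊆ {1,…,k}} ℳ_ℝ(R(J))} = ⟨Nuns(ℓ)⟩_c. (That is, for such general parameters c, the immaculate and really immaculate loci of the splitting-fan toric variety both coincide with the c-hull of the generating immaculate seed.) -/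

import Mathlib

open scoped BigOperators

set_option linter.unusedVariables false

/-- The class map `π : ℝ^{ℓ₁+…+ℓ_k} → ℝ^k` of a splitting fan. -/
noncomputable def splitPiR (k : ℕ) (ℓ : Fin k → ℕ)
    (c : ∀ i j : Fin k, Fin (ℓ j) → ℤ)
    (x : (Σ j : Fin k, Fin (ℓ j)) → ℝ) : Fin k → ℝ :=
  fun i => (∑ ν : Fin (ℓ i), x ⟨i, ν⟩) +
    ∑ j : Fin k, if i < j then ∑ ν : Fin (ℓ j), (c i j ν : ℝ) * x ⟨j, ν⟩ else 0

/-- The integral class map `π : ℤ^{ℓ₁+…+ℓ_k} → ℤ^k` of a splitting fan. -/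
def splitPiZ (k : ℕ) (ℓ : Fin k → ℕ)
    (c : ∀ i j : Fin k, Fin (ℓ j) → ℤ)
    (x : (Σ j : Fin k, Fin (ℓ j)) → ℤ) : Fin k → ℤ :=
  fun i => (∑ ν : Fin (ℓ i), x ⟨i, ν⟩) +
    ∑ j : Fin k, if i < j then ∑ ν : Fin (ℓ j), c i j ν * x ⟨j, ν⟩ else 0

/-- The real maculate region `ℳ_ℝ(R(J))`. -/
noncomputable def splitMacR (k : ℕ) (ℓ : Fin k → ℕ)
    (c : ∀ i j : Fin k, Fin (ℓ j) → ℤ) (J : Set (Fin k)) : Set (Fin k → ℝ) :=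
  splitPiR k ℓ c ''
    {x | (∀ ρ : Σ j : Fin k, Fin (ℓ j), ρ.1 ∈ J → x ρ ≤ -1) ∧
         (∀ ρ : Σ j : Fin k, Fin (ℓ j), ρ.1 ∉ J → 0 ≤ x ρ)}

/-- The integral maculate set `ℳ_ℤ(R(J))`. -/
def splitMacZ (k : ℕ) (ℓ : Fin k → ℕ)
    (c : ∀ i j : Fin k, Fin (ℓ j) → ℤ) (J : Set (Fin k)) : Set (Fin k → ℤ) :=
  splitPiZ k ℓ c ''
    {x | (∀ ρ : Σ j : Fin k, Fin (ℓ j), ρ.1 ∈ J → x ρ ≤ -1) ∧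
         (∀ ρ : Σ j : Fin k, Fin (ℓ j), ρ.1 ∉ J → 0 ≤ x ρ)}

/-- The immaculate locus `Imm_ℤ ⊆ ℤ^k`. -/
def immZ (k : ℕ) (ℓ : Fin k → ℕ)
    (c : ∀ i j : Fin k, Fin (ℓ j) → ℤ) : Set (Fin k → ℤ) :=
  {a | ∀ J : Set (Fin k), a ∉ splitMacZ k ℓ c J}

/-- The really immaculate locus `Imm_ℝ ⊆ ℤ^k`. -/
def immR (k : ℕ) (ℓ : Fin k → ℕ)
    (c : ∀ i j : Fin k, Fin (ℓ j) → ℤ) : Set (Fin k → ℤ) :=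
  {a | ∀ J : Set (Fin k), (fun i => (a i : ℝ)) ∉ splitMacR k ℓ c J}

/-- The shift vector `v_j = (ĉ_{1j}, …, ĉ_{j-1,j}, ℓ_j, 0, …, 0) ∈ ℤ^k`. -/
def vvec (k : ℕ) (ℓ : Fin k → ℕ)
    (c : ∀ i j : Fin k, Fin (ℓ j) → ℤ) (j : Fin k) : Fin k → ℤ :=
  fun i => if i = j then (ℓ j : ℤ) else if i < j then ∑ ν : Fin (ℓ j), c i j ν else 0

/-- The generating immaculate seed `Nuns(ℓ) ⊆ ℤ^k`. -/
def nuns (k : ℕ) (ℓ : Fin k → ℕ) : Set (Fin k → ℤ) :=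
  {a | ∃ j : Fin k, (-((ℓ j : ℤ) - 1) ≤ a j ∧ a j ≤ -1) ∧ ∀ i : Fin k, j < i → a i = 0}

/-- The `c`-hull of `G ⊆ ℤ^k`: the smallest superset closed under the shift operation
`a ↦ a - v_j` applied to elements vanishing in all coordinates `≥ j`. -/
def cHull (k : ℕ) (ℓ : Fin k → ℕ)
    (c : ∀ i j : Fin k, Fin (ℓ j) → ℤ) (G : Set (Fin k → ℤ)) : Set (Fin k → ℤ) :=
  ⋂₀ {H | G ⊆ H ∧
    ∀ a ∈ H, ∀ j : Fin k, (∀ i : Fin k, j ≤ i → a i = 0) → (a - vvec k ℓ c j) ∈ H}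

section Aux

variable {k : ℕ} {ℓ : Fin k → ℕ} {c : ∀ i j : Fin k, Fin (ℓ j) → ℤ}

/-- Generic version of the class map over any commutative ring. -/
def gPi (R : Type) [CommRing R] (k : ℕ) (ℓ : Fin k → ℕ)
    (c : ∀ i j : Fin k, Fin (ℓ j) → ℤ)
    (x : (Σ j : Fin k, Fin (ℓ j)) → R) : Fin k → R :=
  fun i => (∑ ν : Fin (ℓ i), x ⟨i, ν⟩) +
    ∑ j : Fin k, if i < j then ∑ ν : Fin (ℓ j), ((c i j ν : ℤ) : R) * x ⟨j, ν⟩ else 0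

lemma splitPiZ_eq_gPi (k : ℕ) (ℓ : Fin k → ℕ) (c : ∀ i j : Fin k, Fin (ℓ j) → ℤ) :
    splitPiZ k ℓ c = gPi ℤ k ℓ c := by
  funext x i
  simp [splitPiZ, gPi]

lemma splitPiR_eq_gPi (k : ℕ) (ℓ : Fin k → ℕ) (c : ∀ i j : Fin k, Fin (ℓ j) → ℤ) :
    splitPiR k ℓ c = gPi ℝ k ℓ c := rfl

/-- The vector supported on block `jm` with values `y`. -/
def bVec {R : Type} [CommRing R] (jm : Fin k) (y : Fin (ℓ jm) → R) :
    (Σ j : Fin k, Fin (ℓ j)) → R :=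
  fun ρ => if h : ρ.1 = jm then y (Fin.cast (congrArg ℓ h) ρ.2) else 0

lemma bVec_ne {R : Type} [CommRing R] (jm : Fin k) (y : Fin (ℓ jm) → R)
    (ρ : Σ j : Fin k, Fin (ℓ j)) (h : ρ.1 ≠ jm) : bVec jm y ρ = 0 := dif_neg h

lemma bVec_mk {R : Type} [CommRing R] (jm : Fin k) (y : Fin (ℓ jm) → R)
    (ν : Fin (ℓ jm)) : bVec jm y ⟨jm, ν⟩ = y ν := by
  rw [bVec, dif_pos rfl]
  exact congrArg y (Fin.ext rfl)

lemma gPi_add {R : Type} [CommRing R] (x y : (Σ j : Fin k, Fin (ℓ j)) → R) (i : Fin k) :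
    gPi R k ℓ c (fun ρ => x ρ + y ρ) i = gPi R k ℓ c x i + gPi R k ℓ c y i := by
  simp only [gPi, mul_add, Finset.sum_add_distrib]
  have : ∀ j : Fin k,
      (if i < j then (∑ ν : Fin (ℓ j), ((c i j ν : ℤ) : R) * x ⟨j, ν⟩)
        + (∑ ν : Fin (ℓ j), ((c i j ν : ℤ) : R) * y ⟨j, ν⟩) else 0)
      = (if i < j then ∑ ν : Fin (ℓ j), ((c i j ν : ℤ) : R) * x ⟨j, ν⟩ else 0)
      + (if i < j then ∑ ν : Fin (ℓ j), ((c i j ν : ℤ) : R) * y ⟨j, ν⟩ else 0) := by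
    intro j; split_ifs <;> simp
  rw [Finset.sum_congr rfl fun j _ => this j, Finset.sum_add_distrib]
  ring

lemma gPi_bVec {R : Type} [CommRing R] (jm : Fin k) (y : Fin (ℓ jm) → R) (i : Fin k) :
    gPi R k ℓ c (bVec jm y) i =
      if i = jm then ∑ ν, y ν
      else if i < jm then ∑ ν, ((c i jm ν : ℤ) : R) * y ν else 0 := by
  rcases eq_or_ne i jm with h | h
  · subst h
    rw [if_pos rfl]
    have h1 : (∑ ν : Fin (ℓ i), bVec i y ⟨i, ν⟩) = ∑ ν, y ν :=
      Finset.sum_congr rfl fun ν _ => bVec_mk i y ν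
    have h2 : (∑ j : Fin k, if i < j then
        ∑ ν : Fin (ℓ j), ((c i j ν : ℤ) : R) * bVec i y ⟨j, ν⟩ else 0) = 0 := by
      refine Finset.sum_eq_zero fun j _ => ?_
      split_ifs with hij
      · refine Finset.sum_eq_zero fun ν _ => ?_
        rw [bVec_ne i y ⟨j, ν⟩ (by exact fun hji => absurd (hji ▸ hij) (lt_irrefl i)), mul_zero]
      · rfl
    rw [gPi, h1, h2, add_zero]
  · rw [if_neg h]
    have h1 : (∑ ν : Fin (ℓ i), bVec jm y ⟨i, ν⟩) = 0 :=
      Finset.sum_eq_zero fun ν _ => bVec_ne jm y ⟨i, ν⟩ h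
    have h2 : (∑ j : Fin k, if i < j then
        ∑ ν : Fin (ℓ j), ((c i j ν : ℤ) : R) * bVec jm y ⟨j, ν⟩ else 0)
        = if i < jm then ∑ ν, ((c i jm ν : ℤ) : R) * y ν else 0 := by
      rw [Finset.sum_eq_single_of_mem jm (Finset.mem_univ jm)]
      · congr 1
        exact Finset.sum_congr rfl fun ν _ => by rw [bVec_mk]
      · intro j _ hj
        split_ifs with hij
        · exact Finset.sum_eq_zero fun ν _ => by
            rw [bVec_ne jm y ⟨j, ν⟩ hj, mul_zero]
        · rfl
    rw [gPi, h1, h2, zero_add]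

lemma gPi_zero {R : Type} [CommRing R] (i : Fin k) :
    gPi R k ℓ c (fun _ => 0) i = 0 := by
  simp [gPi]

end Aux
section Hull

variable {k : ℕ} {ℓ : Fin k → ℕ} {c : ∀ i j : Fin k, Fin (ℓ j) → ℤ}

/-- Inductive description of the `c`-hull of the nuns. -/
inductive genSet (k : ℕ) (ℓ : Fin k → ℕ) (c : ∀ i j : Fin k, Fin (ℓ j) → ℤ) :
    (Fin k → ℤ) → Prop
  | seed {a : Fin k → ℤ} (h : a ∈ nuns k ℓ) : genSet k ℓ c a
  | shift {a : Fin k → ℤ} (j : Fin k) (h : genSet k ℓ c a)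
      (hz : ∀ i : Fin k, j ≤ i → a i = 0) : genSet k ℓ c (a - vvec k ℓ c j)

lemma cHull_eq_genSet (k : ℕ) (ℓ : Fin k → ℕ) (c : ∀ i j : Fin k, Fin (ℓ j) → ℤ) :
    cHull k ℓ c (nuns k ℓ) = {a | genSet k ℓ c a} := by
  apply Set.Subset.antisymm
  · intro a ha
    exact ha _ ⟨fun b hb => genSet.seed hb, fun b hb j hj => genSet.shift j hb hj⟩
  · intro a ha
    intro H hH
    induction ha with
    | seed h => exact hH.1 h
    | shift j h hz ih => exact hH.2 _ ih j hz

lemma vvec_gt {j i : Fin k} (h : j < i) : vvec k ℓ c j i = 0 := by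
  rw [vvec, if_neg (by exact fun he => absurd (he ▸ h) (lt_irrefl j)),
    if_neg (by exact fun hl => absurd (h.trans hl) (lt_irrefl j))]

lemma vvec_self (j : Fin k) : vvec k ℓ c j j = (ℓ j : ℤ) := by
  rw [vvec, if_pos rfl]

lemma gen_bound (hℓ : ∀ j, 2 ≤ ℓ j) {a : Fin k → ℤ} (h : genSet k ℓ c a)
    (i : Fin k) (hi : ∀ i', i < i' → a i' = 0) :
    -(ℓ i : ℤ) ≤ a i ∧ a i ≤ 0 := by
  cases h with
  | seed h =>
    obtain ⟨j, ⟨hb1, hb2⟩, htop⟩ := h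
    rcases lt_trichotomy i j with h' | h' | h'
    · have := hi j h'
      omega
    · subst h'
      omega
    · rw [htop i h']
      constructor <;> omega
  | shift j h hz =>
    rcases lt_trichotomy i j with h' | h' | h'
    · exfalso
      have h1 := hi j h'
      have h2 := hz j le_rfl
      have h3 := hℓ j
      simp only [Pi.sub_apply, vvec_self, h2] at h1
      omega
    · subst h'
      have h2 := hz i le_rfl
      have h3 := hℓ i
      simp only [Pi.sub_apply, vvec_self, h2]
      constructor <;> omega
    · have h2 := hz i h'.le
      simp only [Pi.sub_apply, vvec_gt h', h2]
      constructor <;> omega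

lemma gen_nonzero (hℓ : ∀ j, 2 ≤ ℓ j) {a : Fin k → ℤ} (h : genSet k ℓ c a) :
    ∃ i, a i ≠ 0 := by
  cases h with
  | seed h =>
    obtain ⟨j, ⟨hb1, hb2⟩, htop⟩ := h
    exact ⟨j, by omega⟩
  | shift j h hz =>
    refine ⟨j, ?_⟩
    have h2 := hz j le_rfl
    have h3 := hℓ j
    simp only [Pi.sub_apply, vvec_self, h2]
    omega

end Hull
section Vanish

variable {k : ℕ} {ℓ : Fin k → ℕ} {c : ∀ i j : Fin k, Fin (ℓ j) → ℤ}
variable {R : Type} [CommRing R] [LinearOrder R] [IsStrictOrderedRing R]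

lemma sum_const_neg_one {n : ℕ} : (∑ _ν : Fin n, (-1 : R)) = -(n : R) := by
  simp

/-- If all coordinates of `gPi x` above `m` vanish, then all entries of `x` in blocks
above `m` vanish. -/
lemma vanish (hℓ : ∀ j, 2 ≤ ℓ j) (J : Set (Fin k)) (x : (Σ j : Fin k, Fin (ℓ j)) → R)
    (hJ : ∀ ρ : Σ j : Fin k, Fin (ℓ j), ρ.1 ∈ J → x ρ ≤ -1)
    (h0 : ∀ ρ : Σ j : Fin k, Fin (ℓ j), ρ.1 ∉ J → 0 ≤ x ρ)
    (m : Fin k) (htop : ∀ i, m < i → gPi R k ℓ c x i = 0) :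
    ∀ i : Fin k, m < i → ∀ ν : Fin (ℓ i), x ⟨i, ν⟩ = 0 := by
  have main : ∀ n : ℕ, ∀ i : Fin k, k - (i : ℕ) ≤ n → m < i → ∀ ν : Fin (ℓ i), x ⟨i, ν⟩ = 0 := by
    intro n
    induction n with
    | zero =>
      intro i hi _
      exact absurd hi (by have := i.isLt; omega)
    | succ n ih =>
      intro i hi him
      have hblocks : ∀ j : Fin k, i < j → ∀ ν : Fin (ℓ j), x ⟨j, ν⟩ = 0 := by
        intro j hj
        refine ih j ?_ (him.trans hj)
        have : (i : ℕ) < (j : ℕ) := hj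
        omega
      have h1 : gPi R k ℓ c x i = 0 := htop i him
      have h2 : (∑ j : Fin k, if i < j then
          ∑ ν : Fin (ℓ j), ((c i j ν : ℤ) : R) * x ⟨j, ν⟩ else 0) = 0 := by
        refine Finset.sum_eq_zero fun j _ => ?_
        split_ifs with hij
        · exact Finset.sum_eq_zero fun ν _ => by rw [hblocks j hij ν, mul_zero]
        · rfl
      have hsum : (∑ ν : Fin (ℓ i), x ⟨i, ν⟩) = 0 := by
        rw [gPi, h2, add_zero] at h1
        exact h1
      by_cases hiJ : i ∈ J
      · exfalso
        have hle : (∑ ν : Fin (ℓ i), x ⟨i, ν⟩) ≤ ∑ _ν : Fin (ℓ i), (-1 : R) :=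
          Finset.sum_le_sum fun ν _ => hJ ⟨i, ν⟩ hiJ
        rw [hsum, sum_const_neg_one] at hle
        have hl2 : (2 : R) ≤ (ℓ i : R) := by exact_mod_cast Nat.cast_le.mpr (hℓ i)
        linarith
      · intro ν
        exact (Finset.sum_eq_zero_iff_of_nonneg fun ν _ => h0 ⟨i, ν⟩ hiJ).mp hsum ν
          (Finset.mem_univ ν)
  exact fun i => main k i (by omega)

lemma gPi_top_sum (hℓ : ∀ j, 2 ≤ ℓ j) (J : Set (Fin k))
    (x : (Σ j : Fin k, Fin (ℓ j)) → R)
    (hJ : ∀ ρ : Σ j : Fin k, Fin (ℓ j), ρ.1 ∈ J → x ρ ≤ -1)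
    (h0 : ∀ ρ : Σ j : Fin k, Fin (ℓ j), ρ.1 ∉ J → 0 ≤ x ρ)
    (m : Fin k) (htop : ∀ i, m < i → gPi R k ℓ c x i = 0) :
    gPi R k ℓ c x m = ∑ ν : Fin (ℓ m), x ⟨m, ν⟩ := by
  have hv := vanish (c := c) hℓ J x hJ h0 m htop
  have h2 : (∑ j : Fin k, if m < j then
      ∑ ν : Fin (ℓ j), ((c m j ν : ℤ) : R) * x ⟨j, ν⟩ else 0) = 0 := by
    refine Finset.sum_eq_zero fun j _ => ?_
    split_ifs with hij
    · exact Finset.sum_eq_zero fun ν _ => by rw [hv j hij ν, mul_zero]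
    · rfl
  rw [gPi, h2, add_zero]

/-- A nun cannot lie in any maculate region. -/
lemma seed_not_mac (hℓ : ∀ j, 2 ≤ ℓ j) (j : Fin k) (a : Fin k → R)
    (hb1 : -((ℓ j : R) - 1) ≤ a j) (hb2 : a j ≤ -1)
    (htop : ∀ i, j < i → a i = 0) (J : Set (Fin k))
    (x : (Σ j : Fin k, Fin (ℓ j)) → R)
    (hJ : ∀ ρ : Σ j : Fin k, Fin (ℓ j), ρ.1 ∈ J → x ρ ≤ -1)
    (h0 : ∀ ρ : Σ j : Fin k, Fin (ℓ j), ρ.1 ∉ J → 0 ≤ x ρ)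
    (heq : gPi R k ℓ c x = a) : False := by
  have htop' : ∀ i, j < i → gPi R k ℓ c x i = 0 := fun i hi => by
    rw [heq]; exact htop i hi
  have hs := gPi_top_sum (c := c) hℓ J x hJ h0 j htop'
  rw [heq] at hs
  by_cases hjJ : j ∈ J
  · have hle : (∑ ν : Fin (ℓ j), x ⟨j, ν⟩) ≤ ∑ _ν : Fin (ℓ j), (-1 : R) :=
      Finset.sum_le_sum fun ν _ => hJ ⟨j, ν⟩ hjJ
    rw [← hs, sum_const_neg_one] at hle
    linarith
  · have hge : (0 : R) ≤ ∑ ν : Fin (ℓ j), x ⟨j, ν⟩ :=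
      Finset.sum_nonneg fun ν _ => h0 ⟨j, ν⟩ hjJ
    rw [← hs] at hge
    linarith

lemma all_eq_neg_one {n : ℕ} {f : Fin n → R} (h1 : ∀ ν, f ν ≤ -1)
    (h2 : (∑ ν, f ν) = -(n : R)) : ∀ ν, f ν = -1 := by
  by_contra hcon
  push_neg at hcon
  obtain ⟨ν, hν⟩ := hcon
  have hlt : (∑ ν, f ν) < ∑ _ν : Fin n, (-1 : R) :=
    Finset.sum_lt_sum (fun i _ => h1 i) ⟨ν, Finset.mem_univ ν, lt_of_le_of_ne (h1 ν) hν⟩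
  rw [h2, sum_const_neg_one] at hlt
  exact lt_irrefl _ hlt

/-- If `a` vanishes from `j` on and `a - v j` is maculate, then so is `a`. -/
lemma shift_reflect (hℓ : ∀ j, 2 ≤ ℓ j) (j : Fin k) (a : Fin k → R)
    (hz : ∀ i : Fin k, j ≤ i → a i = 0) (J : Set (Fin k))
    (x : (Σ j : Fin k, Fin (ℓ j)) → R)
    (hJ : ∀ ρ : Σ j : Fin k, Fin (ℓ j), ρ.1 ∈ J → x ρ ≤ -1)
    (h0 : ∀ ρ : Σ j : Fin k, Fin (ℓ j), ρ.1 ∉ J → 0 ≤ x ρ)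
    (heq : gPi R k ℓ c x = fun i => a i - ((vvec k ℓ c j i : ℤ) : R)) :
    ∃ (J' : Set (Fin k)) (x' : (Σ j : Fin k, Fin (ℓ j)) → R),
      (∀ ρ : Σ j : Fin k, Fin (ℓ j), ρ.1 ∈ J' → x' ρ ≤ -1) ∧
      (∀ ρ : Σ j : Fin k, Fin (ℓ j), ρ.1 ∉ J' → 0 ≤ x' ρ) ∧
      gPi R k ℓ c x' = a := by
  have htop' : ∀ i, j < i → gPi R k ℓ c x i = 0 := fun i hi => by
    rw [heq]
    simp only [hz i hi.le, vvec_gt hi, Int.cast_zero, sub_zero]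
  have hs := gPi_top_sum (c := c) hℓ J x hJ h0 j htop'
  have hsj : (∑ ν : Fin (ℓ j), x ⟨j, ν⟩) = -(ℓ j : R) := by
    rw [← hs, heq]
    simp only [hz j le_rfl, vvec_self]
    push_cast
    ring
  have hjJ : j ∈ J := by
    by_contra hjJ
    have hge : (0 : R) ≤ ∑ ν : Fin (ℓ j), x ⟨j, ν⟩ :=
      Finset.sum_nonneg fun ν _ => h0 ⟨j, ν⟩ hjJ
    rw [hsj] at hge
    have hl2 : (2 : R) ≤ (ℓ j : R) := by exact_mod_cast Nat.cast_le.mpr (hℓ j)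
    linarith
  have hall : ∀ ν : Fin (ℓ j), x ⟨j, ν⟩ = -1 :=
    all_eq_neg_one (fun ν => hJ ⟨j, ν⟩ hjJ) hsj
  refine ⟨J \ {j}, fun ρ => x ρ + bVec j (fun _ => (1 : R)) ρ, ?_, ?_, ?_⟩
  · intro ρ hρ
    dsimp only
    rw [bVec_ne j _ ρ hρ.2, add_zero]
    exact hJ ρ hρ.1
  · intro ρ hρ
    dsimp only
    rcases eq_or_ne ρ.1 j with h | h
    · obtain ⟨i, ν⟩ := ρ
      simp only at h
      subst h
      rw [bVec_mk, hall ν]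
      norm_num
    · rw [bVec_ne j _ ρ h, add_zero]
      refine h0 ρ fun hρJ => hρ ⟨hρJ, h⟩
  · funext i
    rw [gPi_add, heq]
    have hbv : gPi R k ℓ c (bVec j fun _ => (1 : R)) i = ((vvec k ℓ c j i : ℤ) : R) := by
      rw [gPi_bVec, vvec]
      rcases eq_or_ne i j with h | h
      · subst h
        rw [if_pos rfl, if_pos rfl]
        simp
      · rw [if_neg h, if_neg h]
        split_ifs with hij
        · push_cast
          simp
        · simp
    rw [hbv]
    ring

end Vanish
section Easy

variable {k : ℕ} {ℓ : Fin k → ℕ} {c : ∀ i j : Fin k, Fin (ℓ j) → ℤ}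

lemma hull_subset_immZ (hℓ : ∀ j, 2 ≤ ℓ j) :
    cHull k ℓ c (nuns k ℓ) ⊆ immZ k ℓ c := by
  intro a ha
  refine ha (immZ k ℓ c) ⟨?_, ?_⟩
  · rintro b ⟨j, ⟨hb1, hb2⟩, htop⟩ J ⟨x, ⟨hJ, h0⟩, heq⟩
    refine seed_not_mac (c := c) hℓ j b hb1 hb2 htop J x hJ h0 ?_
    rw [← splitPiZ_eq_gPi]
    exact heq
  · rintro b hb j hz J ⟨x, ⟨hJ, h0⟩, heq⟩
    obtain ⟨J', x', hJ', h0', heq2⟩ :=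
      shift_reflect (c := c) hℓ j b hz J x hJ h0 (by
        rw [← splitPiZ_eq_gPi, heq]
        funext i
        simp)
    exact hb J' ⟨x', ⟨hJ', h0'⟩, by rw [splitPiZ_eq_gPi]; exact heq2⟩

lemma hull_subset_immR (hℓ : ∀ j, 2 ≤ ℓ j) :
    cHull k ℓ c (nuns k ℓ) ⊆ immR k ℓ c := by
  intro a ha
  refine ha (immR k ℓ c) ⟨?_, ?_⟩
  · rintro b ⟨j, ⟨hb1, hb2⟩, htop⟩ J ⟨x, ⟨hJ, h0⟩, heq⟩
    refine seed_not_mac (c := c) hℓ j (fun i => (b i : ℝ)) ?_ ?_ ?_ J x hJ h0 ?_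
    · show -((ℓ j : ℝ) - 1) ≤ (b j : ℝ)
      exact_mod_cast hb1
    · show (b j : ℝ) ≤ -1
      exact_mod_cast hb2
    · intro i hi
      show (b i : ℝ) = 0
      exact_mod_cast htop i hi
    · rw [← splitPiR_eq_gPi]
      exact heq
  · rintro b hb j hz J ⟨x, ⟨hJ, h0⟩, heq⟩
    obtain ⟨J', x', hJ', h0', heq2⟩ :=
      shift_reflect (c := c) hℓ j (fun i => (b i : ℝ))
        (fun i hi => by show (b i : ℝ) = 0; exact_mod_cast hz i hi) J x hJ h0 (by
          rw [← splitPiR_eq_gPi, heq]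
          funext i
          simp only [Pi.sub_apply]
          push_cast
          ring)
    exact hb J' ⟨x', ⟨hJ', h0'⟩, by rw [splitPiR_eq_gPi]; exact heq2⟩

lemma castPiR (x : (Σ j : Fin k, Fin (ℓ j)) → ℤ) (i : Fin k) :
    splitPiR k ℓ c (fun ρ => ((x ρ : ℤ) : ℝ)) i = ((splitPiZ k ℓ c x i : ℤ) : ℝ) := by
  simp only [splitPiR, splitPiZ]
  push_cast [apply_ite (fun z : ℤ => (z : ℝ))]
  ring

lemma immR_subset_immZ : immR k ℓ c ⊆ immZ k ℓ c := by
  rintro a ha J ⟨x, ⟨hJ, h0⟩, heq⟩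
  refine ha J ⟨fun ρ => ((x ρ : ℤ) : ℝ), ⟨?_, ?_⟩, ?_⟩
  · intro ρ hρ
    show ((x ρ : ℤ) : ℝ) ≤ -1
    exact_mod_cast hJ ρ hρ
  · intro ρ hρ
    show (0 : ℝ) ≤ ((x ρ : ℤ) : ℝ)
    exact_mod_cast h0 ρ hρ
  · funext i
    rw [castPiR, heq]

end Easy
section HardPrep

variable {k : ℕ} {ℓ : Fin k → ℕ} {c : ∀ i j : Fin k, Fin (ℓ j) → ℤ}

/-- Single-entry vector. -/
def sgl {n : ℕ} (ν : Fin n) (t : ℤ) : Fin n → ℤ := fun ν' => if ν' = ν then t else 0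

lemma sum_sgl {n : ℕ} (ν : Fin n) (t : ℤ) : (∑ ν', sgl ν t ν') = t := by
  simp [sgl]

lemma sum_mul_sgl {n : ℕ} (g : Fin n → ℤ) (ν : Fin n) (t : ℤ) :
    (∑ ν', g ν' * sgl ν t ν') = g ν * t := by
  simp [sgl, mul_ite]

/-- Partial maculate condition: constraints hold and `x` vanishes on blocks `≥ m`. -/
def pcond (k : ℕ) (ℓ : Fin k → ℕ) (m : ℕ) (J : Set (Fin k))
    (x : (Σ j : Fin k, Fin (ℓ j)) → ℤ) : Prop :=
  (∀ ρ : Σ j : Fin k, Fin (ℓ j), ρ.1 ∈ J → x ρ ≤ -1) ∧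
  (∀ ρ : Σ j : Fin k, Fin (ℓ j), ρ.1 ∉ J → 0 ≤ x ρ) ∧
  (∀ ρ : Σ j : Fin k, Fin (ℓ j), m ≤ (ρ.1 : ℕ) → x ρ = 0)

lemma choose_notgen (hℓ : ∀ j, 2 ≤ ℓ j) {a' b' : Fin k → ℤ} (jp : Fin k)
    (hsa : ∀ i', jp < i' → a' i' = 0) (hsb : ∀ i', jp < i' → b' i' = 0)
    (hdiff : (ℓ jp : ℤ) < |a' jp - b' jp|) :
    ¬ genSet k ℓ c a' ∨ ¬ genSet k ℓ c b' := by
  by_cases hA : genSet k ℓ c a'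
  · right
    intro hB
    have b1 := gen_bound hℓ hA jp hsa
    have b2 := gen_bound hℓ hB jp hsb
    rcases abs_cases (a' jp - b' jp) with ⟨h, _⟩ | ⟨h, _⟩ <;> omega
  · left
    exact hA

lemma aprime_supp (m : ℕ) (hm : m < k) (a : Fin k → ℤ)
    (ha : ∀ i : Fin k, m + 1 ≤ (i : ℕ) → a i = 0) (y : Fin (ℓ ⟨m, hm⟩) → ℤ)
    (hsum : (∑ ν, y ν) = a ⟨m, hm⟩) :
    ∀ i : Fin k, m ≤ (i : ℕ) → a i - gPi ℤ k ℓ c (bVec ⟨m, hm⟩ y) i = 0 := by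
  intro i hi
  rcases eq_or_ne i ⟨m, hm⟩ with h | h
  · rw [h, gPi_bVec, if_pos rfl, hsum, sub_self]
  · have hv : m + 1 ≤ (i : ℕ) := by
      have : (i : ℕ) ≠ m := fun hv => h (Fin.ext hv)
      omega
    rw [ha i hv, gPi_bVec, if_neg h,
      if_neg (by intro hlt; have : (i : ℕ) < m := hlt; omega), sub_self]

lemma step_assemble (hℓ : ∀ j, 2 ≤ ℓ j) (m : ℕ) (hm : m < k) (a : Fin k → ℤ)
    (y : Fin (ℓ ⟨m, hm⟩) → ℤ) (hsum : (∑ ν, y ν) = a ⟨m, hm⟩)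
    (hy : (∀ ν, 0 ≤ y ν) ∨ (∀ ν, y ν ≤ -1))
    (hrec : ∃ J x, pcond k ℓ m J x ∧
      gPi ℤ k ℓ c x = fun i => a i - gPi ℤ k ℓ c (bVec ⟨m, hm⟩ y) i) :
    ∃ J x, pcond k ℓ (m + 1) J x ∧ gPi ℤ k ℓ c x = a := by
  obtain ⟨J, xs, ⟨cJ, c0, cs⟩, hxs⟩ := hrec
  have hxpi : gPi ℤ k ℓ c (fun ρ => xs ρ + bVec ⟨m, hm⟩ y ρ) = a := by
    funext i
    rw [gPi_add, congrFun hxs i]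
    ring
  have hsupp : ∀ ρ : Σ j : Fin k, Fin (ℓ j), m + 1 ≤ (ρ.1 : ℕ) →
      xs ρ + bVec ⟨m, hm⟩ y ρ = 0 := by
    intro ρ hρ
    rw [cs ρ (by omega), bVec_ne ⟨m, hm⟩ y ρ (by
      intro h
      have : (ρ.1 : ℕ) = m := by rw [h]
      omega)]
    rfl
  have hν0 : 0 < ℓ (⟨m, hm⟩ : Fin k) := by have := hℓ (⟨m, hm⟩ : Fin k); omega
  have hmval : m ≤ (((⟨m, hm⟩ : Fin k) : Fin k).1 : ℕ) := le_of_eq rfl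
  rcases hy with hpos | hneg
  · -- block m is not in J
    have hjmJ : (⟨m, hm⟩ : Fin k) ∉ J := by
      intro hmem
      have h1 := cJ ⟨⟨m, hm⟩, ⟨0, hν0⟩⟩ hmem
      have h2 := cs ⟨⟨m, hm⟩, ⟨0, hν0⟩⟩ (le_of_eq rfl)
      omega
    refine ⟨J, fun ρ => xs ρ + bVec ⟨m, hm⟩ y ρ, ⟨?_, ?_, hsupp⟩, hxpi⟩
    · intro ρ hρ
      dsimp only
      have hne : ρ.1 ≠ ⟨m, hm⟩ := fun h => hjmJ (h ▸ hρ)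
      rw [bVec_ne ⟨m, hm⟩ y ρ hne, add_zero]
      exact cJ ρ hρ
    · intro ρ hρ
      dsimp only
      rcases eq_or_ne ρ.1 ⟨m, hm⟩ with h | h
      · obtain ⟨i, ν⟩ := ρ
        simp only at h
        subst h
        rw [cs ⟨⟨m, hm⟩, ν⟩ (le_of_eq rfl), bVec_mk, zero_add]
        exact hpos _
      · rw [bVec_ne ⟨m, hm⟩ y ρ h, add_zero]
        exact c0 ρ hρ
  · -- block m goes into J
    refine ⟨insert ⟨m, hm⟩ J, fun ρ => xs ρ + bVec ⟨m, hm⟩ y ρ, ⟨?_, ?_, hsupp⟩, hxpi⟩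
    · intro ρ hρ
      dsimp only
      rcases eq_or_ne ρ.1 ⟨m, hm⟩ with h | h
      · obtain ⟨i, ν⟩ := ρ
        simp only at h
        subst h
        rw [cs ⟨⟨m, hm⟩, ν⟩ (le_of_eq rfl), bVec_mk, zero_add]
        exact hneg _
      · rw [bVec_ne ⟨m, hm⟩ y ρ h, add_zero]
        exact cJ ρ ((Set.mem_insert_iff.mp hρ).resolve_left h)
    · intro ρ hρ
      dsimp only
      have h1 : ρ.1 ∉ J := fun h => hρ (Set.mem_insert_of_mem _ h)
      have h2 : ρ.1 ≠ ⟨m, hm⟩ := fun h => hρ (h ▸ Set.mem_insert _ _)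
      rw [bVec_ne ⟨m, hm⟩ y ρ h2, add_zero]
      exact c0 ρ h1

end HardPrep
section Hard

variable {k : ℕ} {ℓ : Fin k → ℕ} {c : ∀ i j : Fin k, Fin (ℓ j) → ℤ}

lemma gPi_bVec_negone (jm : Fin k) (i : Fin k) :
    gPi ℤ k ℓ c (bVec jm (fun _ => (-1 : ℤ))) i = - vvec k ℓ c jm i := by
  rw [gPi_bVec, vvec]
  rcases eq_or_ne i jm with h | h
  · subst h
    rw [if_pos rfl, if_pos rfl, sum_const_neg_one]
  · rw [if_neg h, if_neg h]
    split_ifs with hij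
    · simp
    · simp

lemma pick_y (hℓ : ∀ j, 2 ≤ ℓ j)
    (hgen : ∀ j : Fin k, ∀ h : (j : ℕ) + 1 < k,
      ∃ ν μ : Fin (ℓ ⟨(j : ℕ) + 1, h⟩),
        (ℓ j : ℤ) < |c j ⟨(j : ℕ) + 1, h⟩ ν - c j ⟨(j : ℕ) + 1, h⟩ μ|)
    (m : ℕ) (hm : m < k) (a : Fin k → ℤ)
    (ha : ∀ i : Fin k, m + 1 ≤ (i : ℕ) → a i = 0) (hgena : ¬ genSet k ℓ c a)
    (hs : 0 ≤ a ⟨m, hm⟩ ∨ a ⟨m, hm⟩ ≤ -(ℓ ⟨m, hm⟩ : ℤ)) :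
    ∃ y : Fin (ℓ ⟨m, hm⟩) → ℤ, (∑ ν', y ν') = a ⟨m, hm⟩ ∧
      ((∀ ν', 0 ≤ y ν') ∨ (∀ ν', y ν' ≤ -1)) ∧
      ¬ genSet k ℓ c (fun i => a i - gPi ℤ k ℓ c (bVec ⟨m, hm⟩ y) i) := by
  have hν0 : 0 < ℓ (⟨m, hm⟩ : Fin k) := by have := hℓ (⟨m, hm⟩ : Fin k); omega
  rcases Nat.eq_zero_or_pos m with hm0 | hmpos
  · -- m = 0 : the complement vanishes identically
    subst hm0
    have hzero : ∀ y : Fin (ℓ (⟨0, hm⟩ : Fin k)) → ℤ, (∑ ν', y ν') = a ⟨0, hm⟩ →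
        ¬ genSet k ℓ c (fun i => a i - gPi ℤ k ℓ c (bVec ⟨0, hm⟩ y) i) := by
      intro y hsum hg
      obtain ⟨i, hi⟩ := gen_nonzero hℓ hg
      exact hi (aprime_supp 0 hm a ha y hsum i (Nat.zero_le _))
    rcases hs with hpos | hneg
    · refine ⟨sgl ⟨0, hν0⟩ (a ⟨0, hm⟩), sum_sgl _ _, Or.inl ?_, hzero _ (sum_sgl _ _)⟩
      intro ν'
      unfold sgl
      split_ifs <;> omega
    · have hsum : (∑ ν', ((fun ν' => -1 + sgl ⟨0, hν0⟩ (a ⟨0, hm⟩ + (ℓ (⟨0, hm⟩ : Fin k) : ℤ)) ν') ν'))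
          = a ⟨0, hm⟩ := by
        rw [Finset.sum_add_distrib, sum_sgl, sum_const_neg_one]
        ring
      refine ⟨_, hsum, Or.inr ?_, hzero _ hsum⟩
      intro ν'
      unfold sgl
      split_ifs <;> omega
  · -- m ≥ 1
    have hm1k : m - 1 < k := by omega
    have h' : ((⟨m - 1, hm1k⟩ : Fin k) : ℕ) + 1 < k := by
      show m - 1 + 1 < k
      omega
    have hfin : (⟨((⟨m - 1, hm1k⟩ : Fin k) : ℕ) + 1, h'⟩ : Fin k) = ⟨m, hm⟩ := by
      apply Fin.ext
      show m - 1 + 1 = m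
      omega
    have H := hgen ⟨m - 1, hm1k⟩ h'
    rw [hfin] at H
    obtain ⟨ν, μ, hνμ⟩ := H
    have hjplt : (⟨m - 1, hm1k⟩ : Fin k) < ⟨m, hm⟩ := by
      show m - 1 < m
      omega
    have hjpne : (⟨m - 1, hm1k⟩ : Fin k) ≠ ⟨m, hm⟩ := ne_of_lt hjplt
    have coord : ∀ y : Fin (ℓ (⟨m, hm⟩ : Fin k)) → ℤ,
        (fun i => a i - gPi ℤ k ℓ c (bVec ⟨m, hm⟩ y) i) ⟨m - 1, hm1k⟩
          = a ⟨m - 1, hm1k⟩ - ∑ ν', c ⟨m - 1, hm1k⟩ ⟨m, hm⟩ ν' * y ν' := by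
      intro y
      dsimp only
      rw [gPi_bVec, if_neg hjpne, if_pos hjplt]
      simp
    have suppgt : ∀ y : Fin (ℓ (⟨m, hm⟩ : Fin k)) → ℤ, (∑ ν', y ν') = a ⟨m, hm⟩ →
        ∀ i' : Fin k, (⟨m - 1, hm1k⟩ : Fin k) < i' →
          (fun i => a i - gPi ℤ k ℓ c (bVec ⟨m, hm⟩ y) i) i' = 0 := by
      intro y hsum i' hi'
      refine aprime_supp m hm a ha y hsum i' ?_
      have : m - 1 < (i' : ℕ) := hi'
      omega
    set L : ℤ := (ℓ (⟨m, hm⟩ : Fin k) : ℤ) with hL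
    have hcase : a ⟨m, hm⟩ = 0 ∨ 1 ≤ a ⟨m, hm⟩ ∨ a ⟨m, hm⟩ = -L ∨ a ⟨m, hm⟩ ≤ -L - 1 := by
      rcases hs with h | h <;> omega
    rcases hcase with h0 | h1 | hC | hD
    · -- a at block m vanishes: take y = 0
      have hsum : (∑ _ν' : Fin (ℓ (⟨m, hm⟩ : Fin k)), (0 : ℤ)) = a ⟨m, hm⟩ := by
        rw [h0, Finset.sum_const, smul_zero]
      refine ⟨fun _ => 0, hsum, Or.inl fun _ => le_refl 0, ?_⟩
      have : (fun i => a i - gPi ℤ k ℓ c (bVec ⟨m, hm⟩ (fun _ => (0 : ℤ))) i) = a := by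
        funext i
        rw [gPi_bVec]
        split_ifs <;> simp
      rw [this]
      exact hgena
    · -- a at block m is positive
      have hsA : (∑ ν', sgl ν (a ⟨m, hm⟩) ν') = a ⟨m, hm⟩ := sum_sgl _ _
      have hsB : (∑ ν', ((fun ν' => sgl ν (a ⟨m, hm⟩ - 1) ν' + sgl μ 1 ν') ν'))
          = a ⟨m, hm⟩ := by
        rw [Finset.sum_add_distrib, sum_sgl, sum_sgl]
        ring
      have hAB : (fun i => a i - gPi ℤ k ℓ c (bVec ⟨m, hm⟩ (sgl ν (a ⟨m, hm⟩))) i) ⟨m - 1, hm1k⟩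
          - (fun i => a i - gPi ℤ k ℓ c
              (bVec ⟨m, hm⟩ (fun ν' => sgl ν (a ⟨m, hm⟩ - 1) ν' + sgl μ 1 ν')) i) ⟨m - 1, hm1k⟩
          = c ⟨m - 1, hm1k⟩ ⟨m, hm⟩ μ - c ⟨m - 1, hm1k⟩ ⟨m, hm⟩ ν := by
        rw [coord, coord, sum_mul_sgl]
        rw [Finset.sum_congr rfl fun ν' _ => mul_add
          (c ⟨m - 1, hm1k⟩ ⟨m, hm⟩ ν') (sgl ν (a ⟨m, hm⟩ - 1) ν') (sgl μ 1 ν'),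
          Finset.sum_add_distrib, sum_mul_sgl, sum_mul_sgl]
        ring
      have hchoice := choose_notgen (c := c) hℓ ⟨m - 1, hm1k⟩
        (suppgt _ hsA) (suppgt _ hsB) (by rw [hAB, abs_sub_comm]; exact hνμ)
      rcases hchoice with hA | hB
      · refine ⟨_, hsA, Or.inl ?_, hA⟩
        intro ν'
        unfold sgl
        split_ifs <;> omega
      · refine ⟨_, hsB, Or.inl ?_, hB⟩
        intro ν'
        unfold sgl
        split_ifs <;> omega
    · -- a at block m equals -ℓ : shift trick
      have hsum : (∑ _ν' : Fin (ℓ (⟨m, hm⟩ : Fin k)), (-1 : ℤ)) = a ⟨m, hm⟩ := by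
        rw [sum_const_neg_one, hC]
      refine ⟨fun _ => -1, hsum, Or.inr fun _ => le_refl _, ?_⟩
      intro hg
      have hz : ∀ i : Fin k, (⟨m, hm⟩ : Fin k) ≤ i →
          (fun i => a i - gPi ℤ k ℓ c (bVec ⟨m, hm⟩ (fun _ => (-1 : ℤ))) i) i = 0 := by
        intro i hi
        exact aprime_supp m hm a ha _ hsum i hi
      have hshift := genSet.shift (⟨m, hm⟩ : Fin k) hg hz
      have heqa : (fun i => a i - gPi ℤ k ℓ c (bVec ⟨m, hm⟩ (fun _ => (-1 : ℤ))) i)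
          - vvec k ℓ c ⟨m, hm⟩ = a := by
        funext i
        simp only [Pi.sub_apply, gPi_bVec_negone]
        ring
      rw [heqa] at hshift
      exact hgena hshift
    · -- a at block m is ≤ -ℓ - 1
      have hsA : (∑ ν', ((fun ν' => -1 + sgl ν (a ⟨m, hm⟩ + L) ν') ν')) = a ⟨m, hm⟩ := by
        rw [Finset.sum_add_distrib, sum_sgl, sum_const_neg_one]
        rw [hL]
        ring
      have hsB : (∑ ν', ((fun ν' => -1 + (sgl ν (a ⟨m, hm⟩ + L + 1) ν' + sgl μ (-1) ν')) ν'))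
          = a ⟨m, hm⟩ := by
        rw [Finset.sum_add_distrib, Finset.sum_add_distrib, sum_sgl, sum_sgl,
          sum_const_neg_one]
        rw [hL]
        ring
      have hAB : (fun i => a i - gPi ℤ k ℓ c
            (bVec ⟨m, hm⟩ (fun ν' => -1 + sgl ν (a ⟨m, hm⟩ + L) ν')) i) ⟨m - 1, hm1k⟩
          - (fun i => a i - gPi ℤ k ℓ c
            (bVec ⟨m, hm⟩ (fun ν' => -1 + (sgl ν (a ⟨m, hm⟩ + L + 1) ν' + sgl μ (-1) ν'))) i)
              ⟨m - 1, hm1k⟩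
          = c ⟨m - 1, hm1k⟩ ⟨m, hm⟩ ν - c ⟨m - 1, hm1k⟩ ⟨m, hm⟩ μ := by
        rw [coord, coord]
        rw [Finset.sum_congr rfl fun ν' _ => mul_add
          (c ⟨m - 1, hm1k⟩ ⟨m, hm⟩ ν') (-1) (sgl ν (a ⟨m, hm⟩ + L) ν'),
          Finset.sum_add_distrib, sum_mul_sgl]
        rw [Finset.sum_congr rfl fun ν' _ => mul_add
          (c ⟨m - 1, hm1k⟩ ⟨m, hm⟩ ν') (-1) (sgl ν (a ⟨m, hm⟩ + L + 1) ν' + sgl μ (-1) ν'),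
          Finset.sum_add_distrib]
        rw [Finset.sum_congr rfl fun ν' _ => mul_add
          (c ⟨m - 1, hm1k⟩ ⟨m, hm⟩ ν') (sgl ν (a ⟨m, hm⟩ + L + 1) ν') (sgl μ (-1) ν'),
          Finset.sum_add_distrib, sum_mul_sgl, sum_mul_sgl]
        ring
      have hchoice := choose_notgen (c := c) hℓ ⟨m - 1, hm1k⟩
        (suppgt _ hsA) (suppgt _ hsB) (by rw [hAB]; exact hνμ)
      rcases hchoice with hA | hB
      · refine ⟨_, hsA, Or.inr ?_, hA⟩
        intro ν'
        unfold sgl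
        split_ifs <;> omega
      · refine ⟨_, hsB, Or.inr ?_, hB⟩
        intro ν'
        unfold sgl
        split_ifs <;> omega

end Hard
section Main

variable {k : ℕ} {ℓ : Fin k → ℕ} {c : ∀ i j : Fin k, Fin (ℓ j) → ℤ}

lemma hard (hℓ : ∀ j, 2 ≤ ℓ j)
    (hgen : ∀ j : Fin k, ∀ h : (j : ℕ) + 1 < k,
      ∃ ν μ : Fin (ℓ ⟨(j : ℕ) + 1, h⟩),
        (ℓ j : ℤ) < |c j ⟨(j : ℕ) + 1, h⟩ ν - c j ⟨(j : ℕ) + 1, h⟩ μ|) :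
    ∀ m, m ≤ k → ∀ a : Fin k → ℤ, (∀ i : Fin k, m ≤ (i : ℕ) → a i = 0) →
      ¬ genSet k ℓ c a → ∃ J x, pcond k ℓ m J x ∧ gPi ℤ k ℓ c x = a := by
  intro m
  induction m with
  | zero =>
    intro _ a ha _
    refine ⟨∅, fun _ => 0, ⟨fun ρ h => absurd h (Set.notMem_empty _),
      fun ρ _ => le_refl 0, fun ρ _ => rfl⟩, ?_⟩
    funext i
    rw [gPi_zero]
    exact (ha i (Nat.zero_le _)).symm
  | succ m ih =>
    intro hm1 a ha hgena
    have hm : m < k := by omega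
    have hs : 0 ≤ a ⟨m, hm⟩ ∨ a ⟨m, hm⟩ ≤ -(ℓ ⟨m, hm⟩ : ℤ) := by
      by_contra hcon
      push_neg at hcon
      refine hgena (genSet.seed ⟨⟨m, hm⟩, ⟨by omega, by omega⟩, fun i hi => ha i ?_⟩)
      have : m < (i : ℕ) := hi
      omega
    obtain ⟨y, hsum, hy, hnotgen⟩ := pick_y hℓ hgen m hm a ha hgena hs
    exact step_assemble hℓ m hm a y hsum hy
      (ih (by omega) _ (aprime_supp m hm a ha y hsum) hnotgen)

end Main
/-- For general parameters `c` (each consecutive block vector `c_{j,j+1}` has two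
entries differing by more than `ℓ_j`), the immaculate and really immaculate loci of
the splitting-fan toric variety both equal the `c`-hull of the generating seed. -/
theorem statement13 (k : ℕ) (hk : 1 ≤ k) (ℓ : Fin k → ℕ) (hℓ : ∀ j, 2 ≤ ℓ j)
    (c : ∀ i j : Fin k, Fin (ℓ j) → ℤ)
    (hc : ∀ i j : Fin k, i < j → ∀ ν, c i j ν ≤ 0)
    (hgen : ∀ j : Fin k, ∀ h : (j : ℕ) + 1 < k,
      ∃ ν μ : Fin (ℓ ⟨(j : ℕ) + 1, h⟩),
        (ℓ j : ℤ) < |c j ⟨(j : ℕ) + 1, h⟩ ν - c j ⟨(j : ℕ) + 1, h⟩ μ|) :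
    immZ k ℓ c = cHull k ℓ c (nuns k ℓ) ∧ immR k ℓ c = cHull k ℓ c (nuns k ℓ) := by
  have h1 : immZ k ℓ c = cHull k ℓ c (nuns k ℓ) := by
    apply Set.Subset.antisymm
    · intro a ha
      rw [cHull_eq_genSet]
      by_contra hg
      obtain ⟨J, x, ⟨cJ, c0, _⟩, hpi⟩ := hard hℓ hgen k le_rfl a
        (fun i hi => absurd hi (not_le.mpr i.isLt)) hg
      exact ha J ⟨x, ⟨cJ, c0⟩, by rw [splitPiZ_eq_gPi]; exact hpi⟩
    · exact hull_subset_immZ hℓ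
  refine ⟨h1, Set.Subset.antisymm ?_ (hull_subset_immR hℓ)⟩
  intro a ha
  rw [← h1]
  exact immR_subset_immZ ha
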